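/- Let Z ⊆ A^ℤ be a two-sided subshift in which every periodic point is synchronizing and such that neither Z_ℕ nor Z_{-ℕ} has an isolated periodic point, let X = Z_ℕ, and let Y ⊆ B^ℕ be any one-sided subshift. Then every continuous shift-commuting map φ' : X' → Y' is the restriction (in both domain and codomain) of a continuous map φ : X → Y with φ ∘ σ = σ ∘ φ, and this extension φ is unique. -/

import Mathlib

open Set

/-- The two-sided shift map on `A^ℤ`: `(tshift x) i = x (i+1)`. -/
def tshift {A : Type*} (x : ℤ → A) : ℤ → A := fun i => x (i + 1)

/-- A two-sided point is periodic if `σ^n x = x` for some `n ≥ 1`. -/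
def TPeriodic {A : Type*} (x : ℤ → A) : Prop := ∃ n : ℕ, 1 ≤ n ∧ tshift^[n] x = x

/-- `Aper X` is the set `X'` of aperiodic points of `X`. -/
def Aper {A : Type*} (X : Set (ℤ → A)) : Set (ℤ → A) := {x ∈ X | ¬ TPeriodic x}

/-- The word `w` occurs in `x` at position `i`. -/
def OccursAt {A : Type*} (w : List A) (x : ℤ → A) (i : ℤ) : Prop :=
  ∀ j : Fin w.length, x (i + (j : ℕ)) = w.get j

/-- The word `w` occurs somewhere in `x`. -/
def OccursIn {A : Type*} (w : List A) (x : ℤ → A) : Prop := ∃ i : ℤ, OccursAt w x i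

/-- The word `w` occurs in some point of `X`. -/
def WordIn {A : Type*} (w : List A) (X : Set (ℤ → A)) : Prop := ∃ x ∈ X, OccursIn w x

/-- `X` is a (two-sided) subshift: a closed shift-invariant subset of the full shift. -/
def IsSubshift {A : Type*} [TopologicalSpace A] (X : Set (ℤ → A)) : Prop :=
  IsClosed X ∧ tshift '' X = X

/-- `X` is an SFT: it is defined by forbidding a finite set of finite words. -/
def IsSFT {A : Type*} (X : Set (ℤ → A)) : Prop :=
  ∃ F : Set (List A), F.Finite ∧ X = {x | ∀ w ∈ F, ¬ OccursIn w x}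

/-- `X` is transitive: any two words of its language can be joined by a connecting word. -/
def IsTransitiveShift {A : Type*} (X : Set (ℤ → A)) : Prop :=
  ∀ u v : List A, WordIn u X → WordIn v X → ∃ w : List A, WordIn (u ++ w ++ v) X

/-- A map between subsets of full shifts is shift-commuting (wherever the shift stays
in the domain set, which is always the case for shift-invariant sets). -/
def ShiftCommuting2 {A B : Type*} {X : Set (ℤ → A)} {Y : Set (ℤ → B)} (f : X → Y) : Prop :=
  ∀ (x : X) (hx : tshift (x : ℤ → A) ∈ X),
    (f ⟨tshift (x : ℤ → A), hx⟩ : ℤ → B) = tshift (f x : ℤ → B)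

/-- `φ : X → Y` restricts (in domain and codomain) to `φ' : X' → Y'`. -/
def RestrictsTo2 {A B : Type*} {X : Set (ℤ → A)} {Y : Set (ℤ → B)}
    (φ : X → Y) (φ' : Aper X → Aper Y) : Prop :=
  ∀ (x : ℤ → A) (hx : x ∈ Aper X), (φ ⟨x, hx.1⟩ : ℤ → B) = (φ' ⟨x, hx⟩ : ℤ → B)


/-- The one-sided shift map on `A^ℕ`. -/
def oshift {A : Type*} (x : ℕ → A) : ℕ → A := fun i => x (i + 1)

/-- A one-sided point is periodic if `σ^n x = x` for some `n ≥ 1`. -/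
def OPeriodic {A : Type*} (x : ℕ → A) : Prop := ∃ n : ℕ, 1 ≤ n ∧ oshift^[n] x = x

/-- `X_ℕ`: the set of right tails `(x_i)_{i ≥ 0}` of points of `X`. -/
def posRay {A : Type*} (X : Set (ℤ → A)) : Set (ℕ → A) :=
  (fun x : ℤ → A => fun n : ℕ => x (n : ℤ)) '' X

/-- `X_{-ℕ}`: the set of left tails `(x_{-i})_{i ≥ 0}` of points of `X`, as a
one-sided system (its shift, shifting in the other direction, becomes `oshift`). -/
def negRay {A : Type*} (X : Set (ℤ → A)) : Set (ℕ → A) :=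
  (fun x : ℤ → A => fun n : ℕ => x (-(n : ℤ))) '' X

/-- A one-sided system `S` has an isolated periodic point. -/
def HasIsolatedPeriodicPt {A : Type*} [TopologicalSpace A] (S : Set (ℕ → A)) : Prop :=
  ∃ x ∈ S, OPeriodic x ∧ ∃ U : Set (ℕ → A), IsOpen U ∧ U ∩ S = {x}

/-- The point `s` is synchronizing in `X`: for some `ℓ`, any two points of `X` agreeing
with `s` on `[-ℓ, ℓ]` can be glued along `s` there. -/
def Synchronizing {A : Type*} (X : Set (ℤ → A)) (s : ℤ → A) : Prop :=
  ∃ l : ℕ, ∀ x ∈ X, ∀ y ∈ X,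
    (∀ i : ℤ, -(l : ℤ) ≤ i ∧ i ≤ (l : ℤ) → x i = s i) →
    (∀ i : ℤ, -(l : ℤ) ≤ i ∧ i ≤ (l : ℤ) → y i = s i) →
    (fun i : ℤ => if i < -(l : ℤ) then x i else if i ≤ (l : ℤ) then s i else y i) ∈ X

/-- `Aper1 X` is the set `X'` of aperiodic points of a one-sided system `X`. -/
def Aper1 {A : Type*} (X : Set (ℕ → A)) : Set (ℕ → A) := {x ∈ X | ¬ OPeriodic x}

/-- A map between subsets of one-sided full shifts is shift-commuting: whenever both `x`
and `oshift x` lie in the domain set, the map intertwines the shifts there. -/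
def ShiftCommuting1 {A B : Type*} {X : Set (ℕ → A)} {Y : Set (ℕ → B)} (f : X → Y) : Prop :=
  ∀ (x : X) (hx : oshift (x : ℕ → A) ∈ X),
    (f ⟨oshift (x : ℕ → A), hx⟩ : ℕ → B) = oshift (f x : ℕ → B)

/-- `φ : X → Y` restricts (in domain and codomain) to `φ' : X' → Y'` (one-sided). -/
def RestrictsTo1 {A B : Type*} {X : Set (ℕ → A)} {Y : Set (ℕ → B)}
    (φ : X → Y) (φ' : Aper1 X → Aper1 Y) : Prop :=
  ∀ (x : ℕ → A) (hx : x ∈ Aper1 X), (φ ⟨x, hx.1⟩ : ℕ → B) = (φ' ⟨x, hx⟩ : ℕ → B)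

/-- `Y` is a one-sided subshift: closed and invariant under the one-sided shift. -/
def IsSubshift1 {A : Type*} [TopologicalSpace A] (Y : Set (ℕ → A)) : Prop :=
  IsClosed Y ∧ oshift '' Y ⊆ Y

section Aux1
variable {C : Type*}

lemma oshift_iter (m : ℕ) (x : ℕ → C) (i : ℕ) : (oshift^[m] x) i = x (i + m) := by
  induction m generalizing x i with
  | zero => simp
  | succ m ih =>
    rw [Function.iterate_succ_apply, ih]
    show x (i + m + 1) = x (i + (m + 1)); congr 1

lemma tshift_iter (m : ℕ) (x : ℤ → C) (i : ℤ) : (tshift^[m] x) i = x (i + m) := by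
  induction m generalizing x i with
  | zero => simp
  | succ m ih =>
    rw [Function.iterate_succ_apply, ih]
    show x (i + m + 1) = x (i + (m + 1)); congr 1; ring

lemma operiodic_oshift {x : ℕ → C} (h : OPeriodic x) : OPeriodic (oshift x) := by
  obtain ⟨n, hn, hx⟩ := h
  exact ⟨n, hn, by rw [← Function.iterate_succ_apply, Function.iterate_succ_apply', hx]⟩

lemma operiodic_oshift_iter {x : ℕ → C} (m : ℕ) (h : OPeriodic x) :
    OPeriodic (oshift^[m] x) := by
  induction m with
  | zero => exact h
  | succ m ih => rw [Function.iterate_succ_apply']; exact operiodic_oshift ih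

lemma per_mod {x : ℕ → C} {m : ℕ} (hm : 1 ≤ m) (h : oshift^[m] x = x) (i : ℕ) :
    x i = x (i % m) := by
  induction i using Nat.strong_induction_on with
  | _ i ih =>
    rcases lt_or_ge i m with h' | h'
    · rw [Nat.mod_eq_of_lt h']
    · have h1 : x i = x (i - m) := by
        conv_lhs => rw [show i = (i - m) + m by omega]
        rw [← oshift_iter m x (i - m), h]
      rw [h1, ih (i - m) (by omega), Nat.mod_eq_sub_mod h']

lemma iter_mul_per {x : ℕ → C} {n : ℕ} (hn : oshift^[n] x = x) (k : ℕ) :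
    oshift^[n * k] x = x := by
  induction k with
  | zero => simp
  | succ k ih =>
    rw [Nat.mul_succ, Function.iterate_add_apply, hn, ih]

lemma per_dvd {x : ℕ → C} {n q : ℕ} (hn1 : 1 ≤ n) (hn : oshift^[n] x = x)
    (hleast : ∀ r, 1 ≤ r → oshift^[r] x = x → n ≤ r)
    (hq1 : 1 ≤ q) (hq : oshift^[q] x = x) : n ∣ q := by
  have h2 : oshift^[n] (oshift^[q % n] x) = oshift^[q % n] x := by
    rw [← Function.iterate_add_apply, Nat.add_comm, Function.iterate_add_apply, hn]
  have hr : oshift^[q % n] x = x := by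
    have step : oshift^[n * (q / n)] (oshift^[q % n] x) = oshift^[q % n] x :=
      iter_mul_per h2 _
    calc oshift^[q % n] x = oshift^[n * (q / n)] (oshift^[q % n] x) := step.symm
      _ = oshift^[q / n * n + q % n] x := by rw [Nat.mul_comm n (q/n), Function.iterate_add_apply]
      _ = oshift^[q] x := by rw [Nat.div_add_mod']
      _ = x := hq
  rcases Nat.eq_zero_or_pos (q % n) with h0 | hpos
  · exact Nat.dvd_of_mod_eq_zero h0
  · have := hleast _ hpos hr
    have := Nat.mod_lt q (by omega : 0 < n)
    omega

end Aux1
section Top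
variable {C : Type*} [TopologicalSpace C] [DiscreteTopology C]

lemma isOpen_cyl1 (x : ℕ → C) (N : ℕ) : IsOpen {g : ℕ → C | ∀ i ≤ N, g i = x i} := by
  have : {g : ℕ → C | ∀ i ≤ N, g i = x i}
      = ⋂ i ∈ Finset.range (N + 1), {g : ℕ → C | g i = x i} := by
    ext g; simp [Nat.lt_succ_iff]
  rw [this]
  refine isOpen_biInter_finset fun i _ => ?_
  have : {g : ℕ → C | g i = x i} = (fun g : ℕ → C => g i) ⁻¹' ({x i} : Set C) := rfl
  rw [this]
  exact (continuous_apply i).isOpen_preimage _ (isOpen_discrete _)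

lemma isClosed_cyl1 (x : ℕ → C) (N : ℕ) : IsClosed {g : ℕ → C | ∀ i ≤ N, g i = x i} := by
  have : {g : ℕ → C | ∀ i ≤ N, g i = x i}
      = ⋂ i ∈ Finset.range (N + 1), {g : ℕ → C | g i = x i} := by
    ext g; simp [Nat.lt_succ_iff]
  rw [this]
  refine isClosed_biInter fun i _ => ?_
  have : {g : ℕ → C | g i = x i} = (fun g : ℕ → C => g i) ⁻¹' ({x i} : Set C) := rfl
  rw [this]
  exact IsClosed.preimage (continuous_apply i) (isClosed_discrete _)

lemma cyl_of_isOpen1 {U : Set (ℕ → C)} (hU : IsOpen U) {x : ℕ → C} (hx : x ∈ U) :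
    ∃ R : ℕ, ∀ y : ℕ → C, (∀ i ≤ R, y i = x i) → y ∈ U := by
  obtain ⟨I, u, hu, hsub⟩ := isOpen_pi_iff.mp hU x hx
  refine ⟨I.sup id, fun y hy => hsub fun a ha => ?_⟩
  rw [hy a (Finset.le_sup (f := id) ha)]
  exact (hu a ha).2

lemma cyl_of_isOpen2 {U : Set (ℤ → C)} (hU : IsOpen U) {x : ℤ → C} (hx : x ∈ U) :
    ∃ R : ℕ, ∀ y : ℤ → C, (∀ i : ℤ, i.natAbs ≤ R → y i = x i) → y ∈ U := by
  obtain ⟨I, u, hu, hsub⟩ := isOpen_pi_iff.mp hU x hx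
  refine ⟨I.sup Int.natAbs, fun y hy => hsub fun a ha => ?_⟩
  rw [hy a (Finset.le_sup (f := Int.natAbs) ha)]
  exact (hu a ha).2

lemma mem_closed_of_approx1 {S : Set (ℕ → C)} (hS : IsClosed S) {b : ℕ → C}
    (h : ∀ R : ℕ, ∃ z ∈ S, ∀ i ≤ R, z i = b i) : b ∈ S := by
  by_contra hb
  obtain ⟨R, hR⟩ := cyl_of_isOpen1 hS.isOpen_compl hb
  obtain ⟨z, hz, hzb⟩ := h R
  exact hR z hzb hz

lemma mem_closed_of_approx2 {S : Set (ℤ → C)} (hS : IsClosed S) {b : ℤ → C}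
    (h : ∀ R : ℕ, ∃ z ∈ S, ∀ i : ℤ, i.natAbs ≤ R → z i = b i) : b ∈ S := by
  by_contra hb
  obtain ⟨R, hR⟩ := cyl_of_isOpen2 hS.isOpen_compl hb
  obtain ⟨z, hz, hzb⟩ := h R
  exact hR z hzb hz

variable {D : Type*} [TopologicalSpace D] [DiscreteTopology D]

/-- Continuity at a point of a map into a one-sided full shift gives a prefix modulus. -/
lemma cont_prefix {S : Set (ℕ → C)} {f : ↥S → (ℕ → D)} (hf : Continuous f)
    (x : ↥S) (K : ℕ) :
    ∃ L : ℕ, ∀ y : ↥S, (∀ i ≤ L, (y : ℕ → C) i = (x : ℕ → C) i) →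
      ∀ k ≤ K, f y k = f x k := by
  have hW : IsOpen {g : ℕ → D | ∀ k ≤ K, g k = f x k} := isOpen_cyl1 _ _
  have hpre : IsOpen (f ⁻¹' {g : ℕ → D | ∀ k ≤ K, g k = f x k}) := hW.preimage hf
  rw [isOpen_induced_iff] at hpre
  obtain ⟨U, hU, hUeq⟩ := hpre
  have hxU : (x : ℕ → C) ∈ U := by
    have : x ∈ f ⁻¹' {g : ℕ → D | ∀ k ≤ K, g k = f x k} := fun k _ => rfl
    rw [← hUeq] at this; exact this
  obtain ⟨R, hR⟩ := cyl_of_isOpen1 hU hxU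
  refine ⟨R, fun y hy k hk => ?_⟩
  have : y ∈ f ⁻¹' {g : ℕ → D | ∀ k ≤ K, g k = f x k} := by
    rw [← hUeq]; exact hR _ hy
  exact this k hk

end Top

section Baire

lemma exists_isolated {α : Type*} [TopologicalSpace α] [T2Space α] {K : Set α}
    (hK : IsCompact K) (hne : K.Nonempty) (hct : K.Countable) :
    ∃ u ∈ K, ∃ V : Set α, IsOpen V ∧ V ∩ K = {u} := by
  haveI : CompactSpace ↥K := isCompact_iff_compactSpace.mp hK
  haveI : Countable ↥K := hct.to_subtype
  haveI : Nonempty ↥K := hne.to_subtype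
  have hcl : ∀ c : ↥K, IsClosed ({c} : Set ↥K) := fun c => isClosed_singleton
  have hun : (⋃ c : ↥K, ({c} : Set ↥K)) = univ := by
    ext c; simp
  obtain ⟨c, hc⟩ := nonempty_interior_of_iUnion_of_closed hcl hun
  have hopen : IsOpen ({c} : Set ↥K) := by
    have hsub : interior ({c} : Set ↥K) ⊆ {c} := interior_subset
    obtain ⟨d, hd⟩ := hc
    have : d = c := hsub hd
    subst this
    have : interior ({d} : Set ↥K) = {d} :=
      Subset.antisymm hsub (by intro e he; rw [mem_singleton_iff] at he; subst he; exact hd)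
    rw [← this]; exact isOpen_interior
  rw [isOpen_induced_iff] at hopen
  obtain ⟨V, hV, hVeq⟩ := hopen
  refine ⟨c, c.2, V, hV, ?_⟩
  ext z
  constructor
  · rintro ⟨hzV, hzK⟩
    have : (⟨z, hzK⟩ : ↥K) ∈ Subtype.val ⁻¹' V := hzV
    rw [hVeq] at this
    simpa using congrArg Subtype.val this
  · rintro rfl
    have : c ∈ Subtype.val ⁻¹' V := by rw [hVeq]; rfl
    exact ⟨this, c.2⟩

end Baire
section Cnt
variable {C : Type*} [Finite C]

lemma countable_operiodic : ({x : ℕ → C | OPeriodic x}).Countable := by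
  have hsub : {x : ℕ → C | OPeriodic x} ⊆
      ⋃ m : ℕ, range (fun w : Fin (m + 1) → C =>
        (fun i : ℕ => w ⟨i % (m + 1), Nat.mod_lt _ (by omega)⟩ : ℕ → C)) := by
    intro x hx
    obtain ⟨n, hn, hper⟩ := hx
    have hmn : (n - 1) + 1 = n := by omega
    refine mem_iUnion.mpr ⟨n - 1, ⟨fun j => x j, ?_⟩⟩
    funext i
    have := per_mod (m := (n - 1) + 1) (by omega) (by rw [hmn]; exact hper) i
    exact this.symm
  refine Countable.mono hsub (countable_iUnion fun m => countable_range _)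

end Cnt
section Dom
variable {A : Type*}

/-- shift by an arbitrary integer. -/
def myShift (k : ℤ) (x : ℤ → A) : ℤ → A := fun i => x (i + k)

lemma memZ {Z : Set (ℤ → A)} (hZi : tshift '' Z = Z) :
    ∀ (k : ℤ) (z : ℤ → A), z ∈ Z → myShift k z ∈ Z := by
  have hfwd : ∀ z ∈ Z, tshift z ∈ Z := by
    intro z hz; rw [← hZi]; exact Set.mem_image_of_mem _ hz
  have hbwd : ∀ z ∈ Z, (fun i : ℤ => z (i - 1)) ∈ Z := by
    intro z hz
    rw [← hZi] at hz
    obtain ⟨y, hy, hyz⟩ := hz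
    have : (fun i : ℤ => z (i - 1)) = y := by
      funext i; rw [← hyz]; show y (i - 1 + 1) = y i; congr 1; ring
    rw [this]; exact hy
  intro k
  induction k using Int.induction_on with
  | zero => intro z hz; have : myShift 0 z = z := funext fun i => by simp [myShift]
            rw [this]; exact hz
  | succ k ih =>
      intro z hz
      have : myShift (k + 1) z = tshift (myShift k z) := by
        funext i; show z (i + (k + 1)) = z (i + 1 + k); congr 1; ring
      rw [this]; exact hfwd _ (ih z hz)
  | pred k ih =>
      intro z hz
      have : myShift (-(k:ℤ) - 1) z = (fun i : ℤ => (myShift (-k) z) (i - 1)) := by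
        funext i; show z (i + (-(k:ℤ) - 1)) = z (i - 1 + -k); congr 1; ring
      rw [this]; exact hbwd _ (ih z hz)

lemma posRay_mem {Z : Set (ℤ → A)} {x : ℕ → A} :
    x ∈ posRay Z ↔ ∃ z ∈ Z, ∀ i : ℕ, z (i : ℤ) = x i := by
  constructor
  · rintro ⟨z, hz, rfl⟩; exact ⟨z, hz, fun i => rfl⟩
  · rintro ⟨z, hz, h⟩; exact ⟨z, hz, funext h⟩

lemma oshift_mem_posRay {Z : Set (ℤ → A)} (hZi : tshift '' Z = Z) {x : ℕ → A}
    (hx : x ∈ posRay Z) : oshift x ∈ posRay Z := by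
  obtain ⟨z, hz, hzx⟩ := posRay_mem.mp hx
  refine posRay_mem.mpr ⟨myShift 1 z, memZ hZi 1 z hz, fun i => ?_⟩
  show z ((i : ℤ) + 1) = x (i + 1)
  have := hzx (i + 1)
  rwa [show (((i + 1 : ℕ)) : ℤ) = (i : ℤ) + 1 by push_cast; ring] at this

lemma oshift_iter_mem_posRay {Z : Set (ℤ → A)} (hZi : tshift '' Z = Z) {x : ℕ → A}
    (hx : x ∈ posRay Z) (m : ℕ) : oshift^[m] x ∈ posRay Z := by
  induction m with
  | zero => exact hx
  | succ m ih => rw [Function.iterate_succ_apply']; exact oshift_mem_posRay hZi ih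

lemma posRay_closed [Fintype A] [TopologicalSpace A] [DiscreteTopology A]
    {Z : Set (ℤ → A)} (hZc : IsClosed Z) : IsClosed (posRay Z) := by
  have hcomp : IsCompact Z := hZc.isCompact
  have hcont : Continuous (fun x : ℤ → A => fun n : ℕ => x (n : ℤ)) :=
    continuous_pi fun n => continuous_apply _
  exact (hcomp.image hcont).isClosed

end Dom
section Dom2
variable {A : Type*}

/-- the two-sided periodic extension of a one-sided periodic point. -/
def pext (p : ℕ → A) (n : ℕ) : ℤ → A := fun i => p ((i % (n : ℤ)).toNat)

lemma pext_dvd {p : ℕ → A} {n : ℕ} (hn1 : 1 ≤ n) {i j : ℤ} (h : (n : ℤ) ∣ j - i) :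
    pext p n j = pext p n i := by
  obtain ⟨k, hk⟩ := h
  have hj : j = i + (n : ℤ) * k := by linarith
  subst hj
  unfold pext
  rw [Int.add_mul_emod_self_left]

lemma pext_nonneg {p : ℕ → A} {n : ℕ} (hn1 : 1 ≤ n) (hper : oshift^[n] p = p) {j : ℤ}
    (hj : 0 ≤ j) : pext p n j = p j.toNat := by
  unfold pext
  have h1 : (j % (n : ℤ)) = ((j.toNat % n : ℕ) : ℤ) := by
    push_cast
    rw [Int.toNat_of_nonneg hj]
  rw [h1, Int.toNat_natCast]
  exact (per_mod hn1 hper j.toNat).symm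

lemma pext_nat {p : ℕ → A} {n : ℕ} (hn1 : 1 ≤ n) (hper : oshift^[n] p = p) (i : ℕ) :
    pext p n (i : ℤ) = p i := by
  rw [pext_nonneg hn1 hper (by positivity), Int.toNat_natCast]

lemma pext_mem [Fintype A] [TopologicalSpace A] [DiscreteTopology A]
    {Z : Set (ℤ → A)} (hZc : IsClosed Z) (hZi : tshift '' Z = Z)
    {p : ℕ → A} (hp : p ∈ posRay Z) {n : ℕ} (hn1 : 1 ≤ n) (hper : oshift^[n] p = p) :
    pext p n ∈ Z := by
  obtain ⟨zh, hzh, hz⟩ := posRay_mem.mp hp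
  apply mem_closed_of_approx2 hZc
  intro R
  refine ⟨myShift ((n : ℤ) * R) zh, memZ hZi _ _ hzh, fun i hi => ?_⟩
  have hnn : 0 ≤ i + (n : ℤ) * R := by
    have h1 : -(R : ℤ) ≤ i := by omega
    have h2 : (R : ℤ) ≤ (n : ℤ) * R :=
      le_mul_of_one_le_left (by positivity) (by exact_mod_cast hn1)
    linarith
  show zh (i + (n : ℤ) * R) = pext p n i
  have h2 : zh (i + (n : ℤ) * R) = p ((i + (n : ℤ) * R).toNat) := by
    have := hz ((i + (n : ℤ) * R).toNat)
    rwa [Int.toNat_of_nonneg hnn] at this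
  rw [h2, ← pext_nonneg hn1 hper hnn]
  exact pext_dvd hn1 ⟨R, by ring⟩

lemma pext_tper {p : ℕ → A} {n : ℕ} (hn1 : 1 ≤ n) : tshift^[n] (pext p n) = pext p n := by
  funext i
  rw [tshift_iter]
  exact pext_dvd hn1 ⟨1, by ring⟩

end Dom2
section Dom3
variable {A : Type*}

def glueAt (l : ℕ) (s x y : ℤ → A) : ℤ → A :=
  fun i : ℤ => if i < -(l : ℤ) then x i else if i ≤ (l : ℤ) then s i else y i

def SyncProp (Z : Set (ℤ → A)) (s : ℤ → A) (l : ℕ) : Prop :=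
  ∀ x ∈ Z, ∀ y ∈ Z,
    (∀ i : ℤ, -(l : ℤ) ≤ i ∧ i ≤ (l : ℤ) → x i = s i) →
    (∀ i : ℤ, -(l : ℤ) ≤ i ∧ i ≤ (l : ℤ) → y i = s i) →
    glueAt l s x y ∈ Z

lemma glueAt_left {l : ℕ} {s x y : ℤ → A} {j : ℤ} (h : j < -(l : ℤ)) :
    glueAt l s x y j = x j := by simp only [glueAt]; rw [if_pos h]

lemma glueAt_box {l : ℕ} {s x y : ℤ → A} {j : ℤ} (h1 : -(l : ℤ) ≤ j) (h2 : j ≤ (l : ℤ)) :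
    glueAt l s x y j = s j := by
  simp only [glueAt]; rw [if_neg (by omega), if_pos h2]

lemma glueAt_right {l : ℕ} {s x y : ℤ → A} {j : ℤ} (h : (l : ℤ) < j) :
    glueAt l s x y j = y j := by
  simp only [glueAt]; rw [if_neg (by omega), if_neg (by omega)]

lemma glueAt_lowleft {l : ℕ} {s y : ℤ → A} {j : ℤ} (h : j ≤ (l : ℤ)) :
    glueAt l s s y j = s j := by
  simp only [glueAt]; split_ifs <;> first | rfl | omega

/-- Any point of `posRay Z` close enough to a periodic point has a lift which equals the
periodic extension on all nonpositive coordinates. -/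
lemma lift_lemma {Z : Set (ℤ → A)} (hZi : tshift '' Z = Z)
    {p : ℕ → A} {n l : ℕ} (hn1 : 1 ≤ n) (hper : oshift^[n] p = p)
    (hsZ : pext p n ∈ Z) (hl : SyncProp Z (pext p n) l)
    {x : ℕ → A} (hx : x ∈ posRay Z) {N : ℕ} (hagree : ∀ i ≤ N, x i = p i)
    (hN : n * (l + 1) + l ≤ N) :
    ∃ xh ∈ Z, (∀ i : ℕ, xh (i : ℤ) = x i) ∧ (∀ i : ℤ, i ≤ 0 → xh i = pext p n i) := by
  set s := pext p n with hs
  set m₀ : ℕ := n * (l + 1) with hm₀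
  have hm₀l : l + 1 ≤ m₀ := by
    rw [hm₀]; exact Nat.le_mul_of_pos_left (l + 1) (by omega)
  obtain ⟨xt, hxt, hxtx⟩ := posRay_mem.mp hx
  have hR : myShift (m₀ : ℤ) xt ∈ Z := memZ hZi _ _ hxt
  have hxval : ∀ j : ℤ, 0 ≤ j → j ≤ (N : ℤ) → xt j = p j.toNat := by
    intro j hj0 hjN
    have h1 : xt j = x j.toNat := by
      have := hxtx j.toNat
      rwa [Int.toNat_of_nonneg hj0] at this
    rw [h1]
    exact hagree _ (by omega)
  have hboxR : ∀ i : ℤ, -(l : ℤ) ≤ i ∧ i ≤ (l : ℤ) → (myShift (m₀ : ℤ) xt) i = s i := by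
    rintro i ⟨hi1, hi2⟩
    show xt (i + (m₀ : ℤ)) = s i
    have h0 : 0 ≤ i + (m₀ : ℤ) := by omega
    have h1 : i + (m₀ : ℤ) ≤ (N : ℤ) := by omega
    rw [hxval _ h0 h1, ← pext_nonneg hn1 hper h0]
    exact pext_dvd hn1 ⟨(l : ℤ) + 1, by rw [hm₀]; push_cast; ring⟩
  have hG : glueAt l s s (myShift (m₀ : ℤ) xt) ∈ Z :=
    hl s hsZ _ hR (fun i _ => rfl) hboxR
  refine ⟨myShift (-(m₀ : ℤ)) (glueAt l s s (myShift (m₀ : ℤ) xt)),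
    memZ hZi _ _ hG, ?_, ?_⟩
  · intro i
    show glueAt l s s (myShift (m₀ : ℤ) xt) ((i : ℤ) + -(m₀ : ℤ)) = x i
    rcases le_or_gt ((i : ℤ) + -(m₀ : ℤ)) (l : ℤ) with h | h
    · rw [glueAt_lowleft h]
      have h1 : s ((i : ℤ) + -(m₀ : ℤ)) = s (i : ℤ) :=
        (pext_dvd hn1 ⟨(l : ℤ) + 1, by rw [hm₀]; push_cast; ring⟩).symm
      rw [h1, hs, pext_nat hn1 hper]
      exact (hagree i (by omega)).symm
    · rw [glueAt_right h]
      show xt ((i : ℤ) + -(m₀ : ℤ) + (m₀ : ℤ)) = x i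
      rw [show (i : ℤ) + -(m₀ : ℤ) + (m₀ : ℤ) = (i : ℤ) by ring]
      exact hxtx i
  · intro i hi
    show glueAt l s s (myShift (m₀ : ℤ) xt) (i + -(m₀ : ℤ)) = s i
    rw [glueAt_lowleft (by omega)]
    exact pext_dvd hn1 ⟨-((l : ℤ) + 1), by rw [hm₀]; push_cast; ring⟩

end Dom3
section Dom4
variable {A : Type*} [Fintype A] [TopologicalSpace A] [DiscreteTopology A]

/-- Existence of a "left defect" point: equal to the periodic extension strictly
above `d₀`, different at `d₀`, with `d₀` within `[-l-n, -l-1]`. -/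
lemma xi_lemma {Z : Set (ℤ → A)} (hZi : tshift '' Z = Z)
    (h2 : ¬ HasIsolatedPeriodicPt (negRay Z))
    {p : ℕ → A} {n l : ℕ} (hn1 : 1 ≤ n) (hper : oshift^[n] p = p)
    (hsZ : pext p n ∈ Z) (hl : SyncProp Z (pext p n) l) :
    ∃ (ξh : ℤ → A) (d₀ : ℤ), ξh ∈ Z ∧ (-(l : ℤ) - n ≤ d₀) ∧ (d₀ ≤ -(l : ℤ) - 1) ∧
      (∀ i : ℤ, d₀ < i → ξh i = pext p n i) ∧ ξh d₀ ≠ pext p n d₀ := by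
  classical
  set s := pext p n with hs
  -- the negative ray of s, a periodic point of negRay Z
  set ν : ℕ → A := fun k : ℕ => s (-(k : ℤ)) with hν
  have hνmem : ν ∈ negRay Z := ⟨s, hsZ, rfl⟩
  have hνper : OPeriodic ν := by
    refine ⟨n, hn1, funext fun k => ?_⟩
    rw [oshift_iter]
    show s (-((k + n : ℕ) : ℤ)) = s (-(k : ℤ))
    exact pext_dvd hn1 ⟨-1, by push_cast; ring⟩
  set M : ℕ := 2 * l + 2 * n + 2 with hM
  set Uc : Set (ℕ → A) := {g : ℕ → A | ∀ k ≤ M, g k = ν k} with hUc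
  have hUco : IsOpen Uc := isOpen_cyl1 ν M
  have hne : Uc ∩ negRay Z ≠ {ν} := fun h => h2 ⟨ν, hνmem, hνper, Uc, hUco, h⟩
  have hμex : ∃ μ ∈ Uc ∩ negRay Z, μ ≠ ν := by
    by_contra hno
    push_neg at hno
    exact hne (Subset.antisymm (fun μ h => hno μ h)
      (by rintro μ rfl; exact ⟨fun k _ => rfl, hνmem⟩))
  obtain ⟨μ, ⟨hμU, hμneg⟩, hμν⟩ := hμex
  obtain ⟨w, hw, hwμ⟩ := hμneg
  -- least defect of w on the negative ray
  have hQ : ∃ k : ℕ, w (-(k : ℤ)) ≠ s (-(k : ℤ)) := by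
    by_contra hq
    push_neg at hq
    exact hμν (by rw [← hwμ]; funext k; exact hq k)
  set kstar := Nat.find hQ with hkstar
  have hkQ : w (-(kstar : ℤ)) ≠ s (-(kstar : ℤ)) := Nat.find_spec hQ
  have hkmin : ∀ k < kstar, w (-(k : ℤ)) = s (-(k : ℤ)) := by
    intro k hk
    have := Nat.find_min hQ hk
    push_neg at this; exact this
  have hMk : M < kstar := by
    rcases le_or_gt kstar M with h | h
    · exfalso
      apply hkQ
      have h1 : μ kstar = ν kstar := hμU kstar h
      rw [← hwμ] at h1
      exact h1
    · exact h
  set c : ℤ := -(kstar : ℤ) with hc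
  have hcdef : w c ≠ s c := hkQ
  have hcabove : ∀ j : ℤ, c < j → j ≤ 0 → w j = s j := by
    intro j hj1 hj2
    have hj : j = -(((-j).toNat : ℕ) : ℤ) := by omega
    rw [hj]
    exact hkmin _ (by omega)
  have hcM : c < -(M : ℤ) := by omega
  -- choose t a multiple of n with c + l + 1 ≤ t ≤ c + l + n
  set t : ℤ := -((n : ℤ) * ((-(c + (l : ℤ) + 1)) / (n : ℤ))) with ht
  have htr : t - (c + (l : ℤ) + 1) = (-(c + (l : ℤ) + 1)) % (n : ℤ) := by
    rw [Int.emod_def]; ring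
  have hrnn : 0 ≤ (-(c + (l : ℤ) + 1)) % (n : ℤ) := Int.emod_nonneg _ (by positivity)
  have hrlt : (-(c + (l : ℤ) + 1)) % (n : ℤ) < n :=
    Int.emod_lt_of_pos _ (by exact_mod_cast hn1)
  have htdvd : (n : ℤ) ∣ t := ⟨-((-(c + (l : ℤ) + 1)) / (n : ℤ)), by rw [ht]; ring⟩
  have ht1 : c + (l : ℤ) + 1 ≤ t := by omega
  have ht2 : t ≤ c + (l : ℤ) + n := by omega
  -- glue the shifted w with s
  have hLZ : myShift t w ∈ Z := memZ hZi _ _ hw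
  have hboxL : ∀ i : ℤ, -(l : ℤ) ≤ i ∧ i ≤ (l : ℤ) → (myShift t w) i = s i := by
    rintro i ⟨hi1, hi2⟩
    show w (i + t) = s i
    have h1 : w (i + t) = s (i + t) := hcabove _ (by omega) (by omega)
    rw [h1]
    exact pext_dvd hn1 (by simpa using htdvd)
  have hG : glueAt l s (myShift t w) s ∈ Z :=
    hl _ hLZ s hsZ hboxL (fun i _ => rfl)
  refine ⟨glueAt l s (myShift t w) s, c - t, hG, by omega, by omega, ?_, ?_⟩
  · intro i hi
    rcases lt_or_ge i (-(l : ℤ)) with h | h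
    · rw [glueAt_left h]
      show w (i + t) = s i
      have h1 : w (i + t) = s (i + t) := hcabove _ (by omega) (by omega)
      rw [h1]
      exact pext_dvd hn1 (by simpa using htdvd)
    · rcases le_or_gt i (l : ℤ) with h' | h'
      · rw [glueAt_box h h']
      · rw [glueAt_right h']
  · rw [glueAt_left (by omega)]
    show w (c - t + t) ≠ s (c - t)
    rw [show c - t + t = c by ring]
    intro hcon
    apply hcdef
    rw [hcon]
    exact pext_dvd hn1 ⟨(-(c + (l : ℤ) + 1)) / (n : ℤ), by rw [ht]; ring⟩
end Dom4
section Dom5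

lemma least_period {C : Type*} {x : ℕ → C} (h : OPeriodic x) :
    ∃ n : ℕ, 1 ≤ n ∧ oshift^[n] x = x ∧ ∀ r, 1 ≤ r → oshift^[r] x = x → n ≤ r := by
  classical
  have hex : ∃ n : ℕ, 1 ≤ n ∧ oshift^[n] x = x := h
  refine ⟨Nat.find hex, (Nat.find_spec hex).1, (Nat.find_spec hex).2, fun r hr1 hr2 => ?_⟩
  exact Nat.find_min' hex ⟨hr1, hr2⟩

variable {A : Type*} [Fintype A] [TopologicalSpace A] [DiscreteTopology A]

/-- The one-sided defect point `ξ` built from `xi_lemma` is aperiodic. -/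
lemma xi_aperiodic
    {p : ℕ → A} {n : ℕ} (hn1 : 1 ≤ n) (hper : oshift^[n] p = p)
    (hleast : ∀ r, 1 ≤ r → oshift^[r] p = p → n ≤ r)
    {ξh : ℤ → A} {d₀ : ℤ} (hd2 : d₀ ≤ -1)
    (hξs : ∀ i : ℤ, d₀ < i → ξh i = pext p n i) (hξd : ξh d₀ ≠ pext p n d₀) :
    ¬ OPeriodic (fun i : ℕ => ξh ((i : ℤ) + d₀)) := by
  set s := pext p n with hs
  set ξ : ℕ → A := fun i : ℕ => ξh ((i : ℤ) + d₀) with hξ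
  rintro ⟨q, hq1, hq⟩
  set τ : ℕ → A := oshift ξ with hτ
  have hτval : ∀ i : ℕ, τ i = s ((i : ℤ) + 1 + d₀) := by
    intro i
    show ξh (((i + 1 : ℕ) : ℤ) + d₀) = s ((i : ℤ) + 1 + d₀)
    rw [show (((i + 1 : ℕ)) : ℤ) + d₀ = (i : ℤ) + 1 + d₀ by push_cast; ring]
    exact hξs _ (by omega)
  have hτn : oshift^[n] τ = τ := by
    funext i
    rw [oshift_iter, hτval, hτval]
    exact pext_dvd hn1 ⟨1, by push_cast; ring⟩
  have hτleast : ∀ r, 1 ≤ r → oshift^[r] τ = τ → n ≤ r := by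
    intro r hr1 hr
    refine hleast r hr1 ?_
    funext k
    rw [oshift_iter]
    have hks : ∀ m : ℕ, p m = s ((m : ℤ) + 1 + d₀ + (-1 - d₀)) := by
      intro m
      rw [show (m : ℤ) + 1 + d₀ + (-1 - d₀) = (m : ℤ) by ring, hs, pext_nat hn1 hper]
    have h1 : ∀ m : ℕ, τ ((-1 - d₀).toNat + m) = p m := by
      intro m
      rw [hτval]
      rw [show (((-1 - d₀).toNat + m : ℕ) : ℤ) + 1 + d₀ = (m : ℤ) by
        push_cast [Int.toNat_of_nonneg (by omega : (0:ℤ) ≤ -1 - d₀)]; ring]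
      rw [hs, pext_nat hn1 hper]
    have h2 : τ ((-1 - d₀).toNat + (k + r)) = τ ((-1 - d₀).toNat + k) := by
      have := congrFun hr ((-1 - d₀).toNat + k)
      rw [oshift_iter] at this
      rw [← this]
      congr 1
      omega
    rw [h1, h1] at h2
    exact h2
  have hτq : oshift^[q] τ = τ := by
    rw [hτ, ← Function.iterate_succ_apply, Function.iterate_succ_apply', hq]
  have hdvd : n ∣ q := per_dvd hn1 hτn hτleast hq1 hτq
  have hξq : ξ q = ξ 0 := by
    have := congrFun hq 0
    rw [oshift_iter] at this
    simpa using this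
  apply hξd
  have h3 : ξ q = s d₀ := by
    show ξh ((q : ℤ) + d₀) = s d₀
    rw [hξs _ (by omega)]
    obtain ⟨k, hk⟩ := hdvd
    exact pext_dvd hn1 ⟨(k : ℤ), by rw [hk]; push_cast; ring⟩
  have h4 : ξ 0 = ξh d₀ := by show ξh ((0 : ℤ) + d₀) = ξh d₀; rw [zero_add]
  rw [← h4, ← hξq, h3]

end Dom5
section Dom6
variable {A B : Type*} [Fintype A] [TopologicalSpace A] [DiscreteTopology A]
  [TopologicalSpace B] [DiscreteTopology B]

lemma chain {Z : Set (ℤ → A)} (hZi : tshift '' Z = Z) {Y : Set (ℕ → B)}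
    (φ' : ↥(Aper1 (posRay Z)) → ↥(Aper1 Y)) (hφ' : ShiftCommuting1 φ') :
    ∀ (m : ℕ) (u : ℕ → A) (hu : u ∈ posRay Z) (hap : oshift^[m] u ∈ Aper1 (posRay Z)),
      ∃ hu' : u ∈ Aper1 (posRay Z),
        (φ' ⟨oshift^[m] u, hap⟩ : ℕ → B) = oshift^[m] (φ' ⟨u, hu'⟩ : ℕ → B) := by
  intro m
  induction m with
  | zero =>
      intro u hu hap
      rw [Function.iterate_zero_apply] at hap
      exact ⟨hap, rfl⟩
  | succ m ih =>
      intro u hu hap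
      have hstep : oshift^[m + 1] u = oshift^[m] (oshift u) := Function.iterate_succ_apply _ _ _
      have hu1 : oshift u ∈ posRay Z := oshift_mem_posRay hZi hu
      have hap' : oshift^[m] (oshift u) ∈ Aper1 (posRay Z) := by rwa [hstep] at hap
      obtain ⟨hσu, heq⟩ := ih (oshift u) hu1 hap'
      have hu' : u ∈ Aper1 (posRay Z) := ⟨hu, fun hper => hσu.2 (operiodic_oshift hper)⟩
      refine ⟨hu', ?_⟩
      have h2 : (φ' ⟨oshift u, hσu⟩ : ℕ → B) = oshift (φ' ⟨u, hu'⟩ : ℕ → B) := hφ' ⟨u, hu'⟩ hσu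
      calc (φ' ⟨oshift^[m + 1] u, hap⟩ : ℕ → B)
          = (φ' ⟨oshift^[m] (oshift u), hap'⟩ : ℕ → B) := by
            have hsub : (⟨oshift^[m + 1] u, hap⟩ : ↥(Aper1 (posRay Z)))
                = ⟨oshift^[m] (oshift u), hap'⟩ := Subtype.ext hstep
            rw [hsub]
        _ = oshift^[m] (φ' ⟨oshift u, hσu⟩ : ℕ → B) := heq
        _ = oshift^[m] (oshift (φ' ⟨u, hu'⟩ : ℕ → B)) := by rw [h2]
        _ = oshift^[m + 1] (φ' ⟨u, hu'⟩ : ℕ → B) := (Function.iterate_succ_apply _ _ _).symm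

/-- The fundamental convergence lemma: near a periodic point of `posRay Z`, the value of
`φ'` on aperiodic points is eventually determined, coordinate by coordinate. -/
lemma star {Z : Set (ℤ → A)} (hZc : IsClosed Z) (hZi : tshift '' Z = Z)
    (hsync : ∀ s ∈ Z, TPeriodic s → Synchronizing Z s)
    (h2 : ¬ HasIsolatedPeriodicPt (negRay Z))
    {Y : Set (ℕ → B)}
    (φ' : ↥(Aper1 (posRay Z)) → ↥(Aper1 Y)) (hcont : Continuous φ')
    (hφ' : ShiftCommuting1 φ')
    {p : ℕ → A} (hp : p ∈ posRay Z) (hper : OPeriodic p) :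
    ∃ b : ℕ → B, ∀ K : ℕ, ∃ N : ℕ, ∀ u (hu : u ∈ Aper1 (posRay Z)),
      (∀ i ≤ N, u i = p i) → ∀ k ≤ K, (φ' ⟨u, hu⟩ : ℕ → B) k = b k := by
  obtain ⟨n, hn1, hpn, hleast⟩ := least_period hper
  set s := pext p n with hs
  have hsZ : s ∈ Z := pext_mem hZc hZi hp hn1 hpn
  have hsT : TPeriodic s := ⟨n, hn1, pext_tper hn1⟩
  obtain ⟨l, hl⟩ := hsync s hsZ hsT
  have hlS : SyncProp Z s l := fun x hx y hy hbx hby => hl x hx y hy hbx hby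
  obtain ⟨ξh, d₀, hξZ, hd1, hd2, hξs, hξd⟩ := xi_lemma hZi h2 hn1 hpn hsZ hlS
  set g : ℕ := (-d₀).toNat with hg
  have hgd : (g : ℤ) = -d₀ := Int.toNat_of_nonneg (by omega)
  have hg1 : l + 1 ≤ g := by omega
  set ξ : ℕ → A := fun i : ℕ => ξh ((i : ℤ) + d₀) with hξdef
  have hξX : ξ ∈ posRay Z := posRay_mem.mpr ⟨myShift d₀ ξh, memZ hZi _ _ hξZ, fun i => rfl⟩
  have hξap : ¬ OPeriodic ξ := xi_aperiodic hn1 hpn hleast (by omega) hξs hξd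
  refine ⟨fun k => (φ' ⟨ξ, hξX, hξap⟩ : ℕ → B) (k + g), fun K => ?_⟩
  obtain ⟨L, hL⟩ := cont_prefix (f := fun y => (φ' y : ℕ → B))
    (continuous_subtype_val.comp hcont) ⟨ξ, hξX, hξap⟩ (K + g)
  refine ⟨n * (l + 1) + l + L + g + 1, fun u hu hagree k hk => ?_⟩
  set N : ℕ := n * (l + 1) + l + L + g + 1 with hN
  obtain ⟨uh, huhZ, huh1, huh2⟩ := lift_lemma hZi hn1 hpn hsZ hlS hu.1 hagree (by omega)
  have hboxξ : ∀ i : ℤ, -(l : ℤ) ≤ i ∧ i ≤ (l : ℤ) → ξh i = s i := fun i hi =>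
    hξs i (by omega)
  have hboxu : ∀ i : ℤ, -(l : ℤ) ≤ i ∧ i ≤ (l : ℤ) → uh i = s i := by
    rintro i ⟨hi1, hi2⟩
    rcases le_or_gt i 0 with h | h
    · exact huh2 i h
    · have h1 : uh i = u i.toNat := by
        have := huh1 i.toNat
        rwa [Int.toNat_of_nonneg (le_of_lt h)] at this
      rw [h1, hagree _ (by omega), ← pext_nonneg hn1 hpn (le_of_lt h)]
  have hGZ : glueAt l s ξh uh ∈ Z := hlS ξh hξZ uh huhZ hboxξ hboxu
  set ζ : ℕ → A := fun i : ℕ => glueAt l s ξh uh ((i : ℤ) + d₀) with hζ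
  have hζX : ζ ∈ posRay Z := posRay_mem.mpr ⟨myShift d₀ _, memZ hZi _ _ hGZ, fun i => rfl⟩
  have hζu : oshift^[g] ζ = u := by
    funext i
    rw [oshift_iter]
    show glueAt l s ξh uh (((i + g : ℕ) : ℤ) + d₀) = u i
    have harg : ((i + g : ℕ) : ℤ) + d₀ = (i : ℤ) := by push_cast; omega
    rw [harg]
    rcases le_or_gt ((i : ℤ)) (l : ℤ) with h | h
    · rw [glueAt_box (by omega) h, hs, pext_nat hn1 hpn]
      exact (hagree i (by omega)).symm
    · rw [glueAt_right h]
      exact huh1 i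
  have hap : oshift^[g] ζ ∈ Aper1 (posRay Z) := by rw [hζu]; exact hu
  obtain ⟨hζap, hchain⟩ := chain hZi φ' hφ' g ζ hζX hap
  have hζξ : ∀ i ≤ L, ζ i = ξ i := by
    intro i hi
    show glueAt l s ξh uh ((i : ℤ) + d₀) = ξh ((i : ℤ) + d₀)
    rcases lt_or_ge ((i : ℤ) + d₀) (-(l : ℤ)) with h | h
    · rw [glueAt_left h]
    · rcases le_or_gt ((i : ℤ) + d₀) (l : ℤ) with h' | h'
      · rw [glueAt_box h h', hξs _ (by omega)]
      · rw [glueAt_right h', hξs _ (by omega)]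
        have hjn : uh ((i : ℤ) + d₀) = u ((i : ℤ) + d₀).toNat := by
          have := huh1 ((i : ℤ) + d₀).toNat
          rwa [Int.toNat_of_nonneg (by omega)] at this
        rw [hjn, hagree _ (by omega), ← pext_nonneg hn1 hpn (by omega)]
  have heq1 : φ' ⟨u, hu⟩ = φ' ⟨oshift^[g] ζ, hap⟩ := by congr 1; exact Subtype.ext hζu.symm
  calc (φ' ⟨u, hu⟩ : ℕ → B) k = (φ' ⟨ζ, hζap⟩ : ℕ → B) (k + g) := by
        rw [heq1, hchain, oshift_iter]
    _ = (φ' ⟨ξ, hξX, hξap⟩ : ℕ → B) (k + g) := hL ⟨ζ, hζap⟩ hζξ (k + g) (by omega)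

end Dom6
section Dom7
variable {A : Type*} [Fintype A] [TopologicalSpace A] [DiscreteTopology A]

/-- Aperiodic points are dense in `posRay Z`. -/
lemma dens {Z : Set (ℤ → A)} (hZc : IsClosed Z)
    (h1 : ¬ HasIsolatedPeriodicPt (posRay Z)) :
    ∀ x ∈ posRay Z, ∀ N : ℕ, ∃ u, u ∈ Aper1 (posRay Z) ∧ ∀ i ≤ N, u i = x i := by
  intro x hx N
  by_cases hxp : OPeriodic x
  · by_contra hno
    push_neg at hno
    set C : Set (ℕ → A) := posRay Z ∩ {g | ∀ i ≤ N, g i = x i} with hC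
    have hCcl : IsClosed C := (posRay_closed hZc).inter (isClosed_cyl1 x N)
    have hCcp : IsCompact C := hCcl.isCompact
    have hCne : C.Nonempty := ⟨x, hx, fun i _ => rfl⟩
    have hCsub : C ⊆ {g : ℕ → A | OPeriodic g} := by
      rintro u ⟨hu1, hu2⟩
      by_contra hup
      obtain ⟨i, hi, hne⟩ := hno u ⟨hu1, hup⟩
      exact hne (hu2 i hi)
    have hCct : C.Countable := Countable.mono hCsub countable_operiodic
    obtain ⟨u, huC, V, hVo, hVeq⟩ := exists_isolated hCcp hCne hCct
    have huV : u ∈ V := by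
      have h0 : u ∈ ({u} : Set (ℕ → A)) := rfl
      rw [← hVeq] at h0; exact h0.1
    apply h1
    refine ⟨u, huC.1, hCsub huC, V ∩ {g | ∀ i ≤ N, g i = x i},
      hVo.inter (isOpen_cyl1 x N), ?_⟩
    ext w
    constructor
    · rintro ⟨⟨hwV, hwc⟩, hwX⟩
      have : w ∈ V ∩ C := ⟨hwV, hwX, hwc⟩
      rw [hVeq] at this; exact this
    · rintro rfl
      exact ⟨⟨huV, huC.2⟩, huC.1⟩
  · exact ⟨x, ⟨hx, hxp⟩, fun i _ => rfl⟩

/-- Points whose shift is also aperiodic are dense in `posRay Z`. -/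
lemma densD {Z : Set (ℤ → A)} (hZc : IsClosed Z) (hZi : tshift '' Z = Z)
    (hsync : ∀ s ∈ Z, TPeriodic s → Synchronizing Z s)
    (h1 : ¬ HasIsolatedPeriodicPt (posRay Z)) :
    ∀ x ∈ posRay Z, ∀ N : ℕ, ∃ u, u ∈ Aper1 (posRay Z) ∧
      oshift u ∈ Aper1 (posRay Z) ∧ ∀ i ≤ N, u i = x i := by
  intro x hx N
  by_contra hno
  push_neg at hno
  set C : Set (ℕ → A) := posRay Z ∩ {g | ∀ i ≤ N, g i = x i} with hC
  have hCcl : IsClosed C := (posRay_closed hZc).inter (isClosed_cyl1 x N)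
  have hCcp : IsCompact C := hCcl.isCompact
  have hCne : C.Nonempty := ⟨x, hx, fun i _ => rfl⟩
  have hCper : ∀ u ∈ C, OPeriodic (oshift u) := by
    rintro u ⟨hu1, hu2⟩
    by_cases hup : OPeriodic u
    · exact operiodic_oshift hup
    · by_contra hop
      obtain ⟨i, hi, hne⟩ := hno u ⟨hu1, hup⟩ ⟨oshift_mem_posRay hZi hu1, hop⟩
      exact hne (hu2 i hi)
  have hCct : C.Countable := by
    have hinj : Function.Injective (fun u : ℕ → A => ((u 0, oshift u) : A × (ℕ → A))) := by
      intro u v huv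
      have h0 : u 0 = v 0 := congrArg Prod.fst huv
      have h1 : oshift u = oshift v := congrArg Prod.snd huv
      funext i
      cases i with
      | zero => exact h0
      | succ i => exact congrFun h1 i
    have hsub : C ⊆ (fun u : ℕ → A => ((u 0, oshift u) : A × (ℕ → A))) ⁻¹'
        ((univ : Set A) ×ˢ {g : ℕ → A | OPeriodic g}) := by
      intro u hu
      exact ⟨mem_univ _, hCper u hu⟩
    exact Countable.mono hsub
      ((countable_univ.prod countable_operiodic).preimage hinj)
  obtain ⟨u, huC, V, hVo, hVeq⟩ := exists_isolated hCcp hCne hCct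
  have huV : u ∈ V := by
    have h0 : u ∈ ({u} : Set (ℕ → A)) := rfl
    rw [← hVeq] at h0; exact h0.1
  obtain ⟨R, hR⟩ := cyl_of_isOpen1 hVo huV
  by_cases hup : OPeriodic u
  · -- the isolated point is periodic : contradicts h1 directly
    apply h1
    refine ⟨u, huC.1, hup, V ∩ {g | ∀ i ≤ N, g i = x i},
      hVo.inter (isOpen_cyl1 x N), ?_⟩
    ext w
    constructor
    · rintro ⟨⟨hwV, hwc⟩, hwX⟩
      have : w ∈ V ∩ C := ⟨hwV, hwX, hwc⟩
      rw [hVeq] at this; exact this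
    · rintro rfl
      exact ⟨⟨huV, huC.2⟩, huC.1⟩
  · -- u is aperiodic with periodic shift; build a nearby distinct point via gluing
    have hz : OPeriodic (oshift u) := hCper u huC
    set z : ℕ → A := oshift u with hzdef
    have hzX : z ∈ posRay Z := oshift_mem_posRay hZi huC.1
    obtain ⟨m, hm1, hzm, hzleast⟩ := least_period hz
    set sz := pext z m with hsz
    have hszZ : sz ∈ Z := pext_mem hZc hZi hzX hm1 hzm
    obtain ⟨lz, hlz⟩ := hsync sz hszZ ⟨m, hm1, pext_tper hm1⟩
    have hlzS : SyncProp Z sz lz := fun a ha b hb hba hbb => hlz a ha b hb hba hbb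
    set M' : ℕ := m * (lz + 1) + lz + 1 with hM'
    -- z is not isolated (h1), giving a point y close to z but different from it
    have hyex : ∃ y ∈ {g : ℕ → A | ∀ i ≤ M', g i = z i} ∩ posRay Z, y ≠ z := by
      by_contra hnoy
      push_neg at hnoy
      apply h1
      refine ⟨z, hzX, hz, {g | ∀ i ≤ M', g i = z i}, isOpen_cyl1 z M', ?_⟩
      exact Subset.antisymm (fun y hy => hnoy y hy)
        (by rintro y rfl; exact ⟨fun i _ => rfl, hzX⟩)
    obtain ⟨y, ⟨hyU, hyX⟩, hyz⟩ := hyex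
    obtain ⟨yh, hyhZ, hyh1, hyh2⟩ :=
      lift_lemma hZi hm1 hzm hszZ hlzS hyX (fun i hi => hyU i hi) (by omega)
    obtain ⟨ut, hutZ, hutu⟩ := posRay_mem.mp huC.1
    have huval : ∀ j : ℤ, 1 ≤ j → ut j = sz (j - 1) := by
      intro j hj
      have hja : ut j = u j.toNat := by
        have := hutu j.toNat
        rwa [Int.toNat_of_nonneg (by omega)] at this
      obtain ⟨k, hk⟩ : ∃ k : ℕ, j.toNat = k + 1 := ⟨j.toNat - 1, by omega⟩
      have hjb : u j.toNat = z k := by rw [hk]; rfl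
      rw [hja, hjb, show j - 1 = ((k : ℕ) : ℤ) by omega, hsz, pext_nat hm1 hzm]
    set a : ℕ := 1 + m * (R + N + lz + 1) with ha
    have ham : ((a : ℤ) - 1) = (m : ℤ) * (R + N + lz + 1) := by rw [ha]; push_cast; ring
    have haRN : R + N + lz + 1 ≤ m * (R + N + lz + 1) :=
      Nat.le_mul_of_pos_left (R + N + lz + 1) (by omega : 0 < m)
    have halz : lz + 1 ≤ a := by omega
    have hboxu : ∀ i : ℤ, -(lz : ℤ) ≤ i ∧ i ≤ (lz : ℤ) → (myShift (a : ℤ) ut) i = sz i := by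
      rintro i ⟨hi1, hi2⟩
      show ut (i + (a : ℤ)) = sz i
      rw [huval _ (by omega)]
      exact pext_dvd hm1 ⟨(R + N + lz + 1 : ℤ), by push_cast; omega⟩
    have hboxy : ∀ i : ℤ, -(lz : ℤ) ≤ i ∧ i ≤ (lz : ℤ) → yh i = sz i := by
      rintro i ⟨hi1, hi2⟩
      rcases le_or_gt i 0 with h | h
      · exact hyh2 i h
      · have hja : yh i = y i.toNat := by
          have := hyh1 i.toNat
          rwa [Int.toNat_of_nonneg (by omega)] at this
        rw [hja, hyU _ (by omega), hsz, ← pext_nonneg hm1 hzm (by omega)]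
    have hGZ : glueAt lz sz (myShift (a : ℤ) ut) yh ∈ Z :=
      hlzS _ (memZ hZi _ _ hutZ) _ hyhZ hboxu hboxy
    set gpt : ℕ → A := fun i : ℕ => glueAt lz sz (myShift (a : ℤ) ut) yh ((i : ℤ) - a)
      with hgpt
    have hgX : gpt ∈ posRay Z := by
      refine posRay_mem.mpr ⟨myShift (-(a : ℤ)) _, memZ hZi _ _ hGZ, fun i => ?_⟩
      show glueAt lz sz (myShift (a : ℤ) ut) yh ((i : ℤ) + -(a : ℤ)) = gpt i
      rw [hgpt]
      norm_num [sub_eq_add_neg]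
    have hagree : ∀ i : ℕ, (i : ℤ) ≤ (a : ℤ) + lz → gpt i = u i := by
      intro i hi
      rcases lt_or_ge ((i : ℤ) - a) (-(lz : ℤ)) with h | h
      · show glueAt lz sz (myShift (a : ℤ) ut) yh ((i : ℤ) - a) = u i
        rw [glueAt_left h]
        show ut ((i : ℤ) - a + a) = u i
        rw [show (i : ℤ) - a + a = (i : ℤ) by ring]
        exact hutu i
      · show glueAt lz sz (myShift (a : ℤ) ut) yh ((i : ℤ) - a) = u i
        rw [glueAt_box h (by omega)]
        have h1 : sz ((i : ℤ) - a) = sz ((i : ℤ) - 1) :=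
          (pext_dvd hm1 ⟨(R + N + lz + 1 : ℤ), by push_cast; omega⟩).symm
        rw [h1, ← huval _ (by omega), hutu i]
    have hdiff : gpt ≠ u := by
      have hkex : ∃ k : ℕ, y k ≠ z k := by
        by_contra hk
        push_neg at hk
        exact hyz (funext hk)
      obtain ⟨k, hk⟩ := hkex
      have hkM : M' < k := by
        by_contra hkM
        exact hk (hyU k (by omega))
      intro hconeq
      apply hk
      have h1 : gpt (k + a) = yh (k : ℤ) := by
        show glueAt lz sz (myShift (a : ℤ) ut) yh (((k + a : ℕ) : ℤ) - a) = yh (k : ℤ)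
        rw [show ((k + a : ℕ) : ℤ) - a = (k : ℤ) by push_cast; ring]
        exact glueAt_right (by omega)
      have h2 : u (k + a) = z k := by
        have h3 : ut ((k + a : ℕ) : ℤ) = sz (((k + a : ℕ) : ℤ) - 1) := huval _ (by omega)
        have h4 : sz (((k + a : ℕ) : ℤ) - 1) = sz (k : ℤ) :=
          pext_dvd hm1 ⟨(R + N + lz + 1 : ℤ), by push_cast; omega⟩
        have h5 : ut ((k + a : ℕ) : ℤ) = u (k + a) := hutu _
        rw [← h5, h3, h4, hsz, pext_nat hm1 hzm]
      calc y k = yh (k : ℤ) := (hyh1 k).symm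
        _ = gpt (k + a) := h1.symm
        _ = u (k + a) := by rw [hconeq]
        _ = z k := h2
    apply hdiff
    have hgVC : gpt ∈ V ∩ C := by
      refine ⟨hR gpt (fun i hi => hagree i (by omega)), hgX, fun i hi => ?_⟩
      rw [hagree i (by omega)]
      exact huC.2 i hi
    rw [hVeq] at hgVC
    exact hgVC

end Dom7
theorem statement8 {A B : Type*} [Fintype A] [TopologicalSpace A] [DiscreteTopology A]
    [Fintype B] [TopologicalSpace B] [DiscreteTopology B]
    (Z : Set (ℤ → A)) (hZ : IsSubshift Z)
    (hsync : ∀ s ∈ Z, TPeriodic s → Synchronizing Z s)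
    (h1 : ¬ HasIsolatedPeriodicPt (posRay Z)) (h2 : ¬ HasIsolatedPeriodicPt (negRay Z))
    (X : Set (ℕ → A)) (hX : X = posRay Z)
    (Y : Set (ℕ → B)) (hY : IsSubshift1 Y)
    (φ' : Aper1 X → Aper1 Y) (hcont : Continuous φ') (hφ' : ShiftCommuting1 φ') :
    ∃! φ : X → Y, Continuous φ ∧ ShiftCommuting1 φ ∧ RestrictsTo1 φ φ' := by
  subst hX
  obtain ⟨hZc, hZi⟩ := hZ
  have EXU : ∀ x, x ∈ posRay Z → ∃ b : ℕ → B, b ∈ Y ∧ ∀ K : ℕ, ∃ N : ℕ,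
      ∀ u (hu : u ∈ Aper1 (posRay Z)), (∀ i ≤ N, u i = x i) →
        ∀ k ≤ K, (φ' ⟨u, hu⟩ : ℕ → B) k = b k := by
    intro x hxX
    by_cases hxp : OPeriodic x
    · obtain ⟨b, hb⟩ := star hZc hZi hsync h2 φ' hcont hφ' hxX hxp
      refine ⟨b, ?_, hb⟩
      apply mem_closed_of_approx1 hY.1
      intro R
      obtain ⟨N, hN⟩ := hb R
      obtain ⟨u, hu, hagree⟩ := dens hZc h1 x hxX N
      exact ⟨(φ' ⟨u, hu⟩ : ℕ → B), (φ' ⟨u, hu⟩).2.1, fun i hi => hN u hu hagree i hi⟩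
    · have hxA : x ∈ Aper1 (posRay Z) := ⟨hxX, hxp⟩
      refine ⟨(φ' ⟨x, hxA⟩ : ℕ → B), (φ' ⟨x, hxA⟩).2.1, fun K => ?_⟩
      obtain ⟨L, hL⟩ := cont_prefix (f := fun y => (φ' y : ℕ → B))
        (continuous_subtype_val.comp hcont) ⟨x, hxA⟩ K
      exact ⟨L, fun u hu hagree k hk => hL ⟨u, hu⟩ hagree k hk⟩
  choose bf hbY hbP using EXU
  set φ : ↥(posRay Z) → ↥Y := fun x => ⟨bf x.1 x.2, hbY x.1 x.2⟩ with hφdef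
  have hccl : ∀ (x : ↥(posRay Z)) (K : ℕ), ∃ N, ∀ y : ↥(posRay Z),
      (∀ i ≤ N, (y : ℕ → A) i = (x : ℕ → A) i) →
        ∀ k ≤ K, bf y.1 y.2 k = bf x.1 x.2 k := by
    intro x K
    obtain ⟨N, hN⟩ := hbP x.1 x.2 K
    refine ⟨N, fun y hy k hk => ?_⟩
    obtain ⟨Ny, hNy⟩ := hbP y.1 y.2 K
    obtain ⟨u, hu, hagree⟩ := dens hZc h1 y.1 y.2 (max N Ny)
    have e1 := hNy u hu (fun i hi => hagree i (le_trans hi (le_max_right _ _))) k hk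
    have e2 := hN u hu (fun i hi => by
      rw [hagree i (le_trans hi (le_max_left _ _))]; exact hy i hi) k hk
    rw [← e1, ← e2]
  have hφcont : Continuous φ := by
    refine Continuous.subtype_mk ?_ _
    refine continuous_pi fun k => ?_
    rw [continuous_iff_continuousAt]
    intro x
    obtain ⟨N, hN⟩ := hccl x k
    have hmem : {y : ↥(posRay Z) | ∀ i ≤ N, (y : ℕ → A) i = (x : ℕ → A) i} ∈ nhds x := by
      have hopen : IsOpen {g : ℕ → A | ∀ i ≤ N, g i = (x : ℕ → A) i} := isOpen_cyl1 _ N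
      exact (hopen.preimage continuous_subtype_val).mem_nhds (fun i _ => rfl)
    have hev : ∀ᶠ y in nhds x, bf (y : ↥(posRay Z)).1 y.2 k = bf x.1 x.2 k :=
      Filter.eventually_of_mem hmem (fun y hy => hN y hy k le_rfl)
    exact Filter.Tendsto.congr' (hev.mono fun y hy => hy.symm) tendsto_const_nhds
  have hφsc : ShiftCommuting1 φ := by
    intro x hx
    funext k
    obtain ⟨N₁, hN₁⟩ := hbP (oshift (x : ℕ → A)) hx k
    obtain ⟨N₂, hN₂⟩ := hbP x.1 x.2 (k + 1)
    obtain ⟨u, hu, hσu, hagree⟩ := densD hZc hZi hsync h1 x.1 x.2 (max (N₁ + 1) N₂)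
    have e1 : (φ' ⟨oshift u, hσu⟩ : ℕ → B) k = bf (oshift (x : ℕ → A)) hx k := by
      refine hN₁ (oshift u) hσu (fun i hi => ?_) k le_rfl
      show u (i + 1) = (x : ℕ → A) (i + 1)
      exact hagree (i + 1) (le_trans (by omega) (le_max_left _ _))
    have e2 : (φ' ⟨u, hu⟩ : ℕ → B) (k + 1) = bf x.1 x.2 (k + 1) :=
      hN₂ u hu (fun i hi => hagree i (le_trans hi (le_max_right _ _))) (k + 1) le_rfl
    have e3 : (φ' ⟨oshift u, hσu⟩ : ℕ → B) = oshift (φ' ⟨u, hu⟩ : ℕ → B) := hφ' ⟨u, hu⟩ hσu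
    show bf (oshift (x : ℕ → A)) hx k = oshift (bf x.1 x.2) k
    calc bf (oshift (x : ℕ → A)) hx k = (φ' ⟨oshift u, hσu⟩ : ℕ → B) k := e1.symm
      _ = (φ' ⟨u, hu⟩ : ℕ → B) (k + 1) := by rw [e3]; rfl
      _ = bf x.1 x.2 (k + 1) := e2
      _ = oshift (bf x.1 x.2) k := rfl
  have hφr : RestrictsTo1 φ φ' := by
    intro x hx
    funext k
    obtain ⟨N, hN⟩ := hbP x hx.1 k
    exact (hN x hx (fun i _ => rfl) k le_rfl).symm
  refine ⟨φ, ⟨hφcont, hφsc, hφr⟩, ?_⟩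
  rintro ψ ⟨hψc, hψs, hψr⟩
  funext x
  apply Subtype.ext
  funext k
  obtain ⟨L, hL⟩ := cont_prefix (f := fun y : ↥(posRay Z) => (ψ y : ℕ → B))
    (continuous_subtype_val.comp hψc) x k
  obtain ⟨N, hN⟩ := hbP x.1 x.2 k
  obtain ⟨u, hu, hagree⟩ := dens hZc h1 x.1 x.2 (max L N)
  have e1 : (ψ ⟨u, hu.1⟩ : ℕ → B) k = (ψ x : ℕ → B) k :=
    hL ⟨u, hu.1⟩ (fun i hi => hagree i (le_trans hi (le_max_left _ _))) k le_rfl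
  have e2 : (ψ ⟨u, hu.1⟩ : ℕ → B) = (φ' ⟨u, hu⟩ : ℕ → B) := hψr u hu
  have e3 : (φ' ⟨u, hu⟩ : ℕ → B) k = bf x.1 x.2 k :=
    hN u hu (fun i hi => hagree i (le_trans hi (le_max_right _ _))) k le_rfl
  show (ψ x : ℕ → B) k = bf x.1 x.2 k
  rw [← e1, e2, e3]
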